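/- arXiv:2305.06464 — 3 statements merged into one kernel-verified Lean document; each statement's English description precedes it below -/
import Mathlib

section
/- Let F be a field, let S be a connected proper F-scheme of dimension 1, let X be a scheme, and let s ∈ Γ(X, O_X) be a global section of the structure sheaf such that the basic open subscheme X_s (the locus where s does not vanish) is affine. Let f : S → X be a morphism of schemes whose set-theoretic image contains at least two points (f is nonconstant). Then there exists a closed point x ∈ S such that the pullback section f♯(s) ∈ Γ(S, O_S) vanishes at x, i.e. the image of f♯(s) in the residue field κ(x) is zero. -/
open AlgebraicGeometry CategoryTheory

universe u


lemma myUC_of_comp {X Y Z : Scheme} (f : X ⟶ Y) (g : Y ⟶ Z)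
    [UniversallyClosed (f ≫ g)] [IsSeparated g] : UniversallyClosed f := by
  have H : MorphismProperty.HasOfPostcompProperty
      @UniversallyClosed @IsSeparated := by
    infer_instance
  exact MorphismProperty.HasOfPostcompProperty.of_postcomp
    (W := @UniversallyClosed) (W' := @IsSeparated) f g ‹_› ‹_›

lemma my_not_UC (F : Type u) [Field F] :
    ¬ UniversallyClosed (Spec.map (CommRingCat.ofHom (algebraMap F (Polynomial F)))) := by
  intro H
  have hEx : ValuativeCriterion.Existence
      (Spec.map (CommRingCat.ofHom (algebraMap F (Polynomial F)))) := by
    rw [UniversallyClosed.eq_valuativeCriterion] at H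
    exact H.1
  set R := PowerSeries F with hR
  let K := FractionRing R
  have hXne : (PowerSeries.X : R) ≠ 0 := PowerSeries.X_ne_zero
  have hinj : Function.Injective (algebraMap R K) := IsFractionRing.injective R K
  have hzne : algebraMap R K PowerSeries.X ≠ 0 := fun h => hXne (hinj (by simpa using h))
  let u : K := (algebraMap R K PowerSeries.X)⁻¹
  let φ : Polynomial F →+* K :=
    Polynomial.eval₂RingHom ((algebraMap R K).comp (algebraMap F R)) u
  have hsq : CommSq (Spec.map (CommRingCat.ofHom φ))
      (Spec.map (CommRingCat.ofHom (algebraMap R K)))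
      (Spec.map (CommRingCat.ofHom (algebraMap F (Polynomial F))))
      (Spec.map (CommRingCat.ofHom (algebraMap F R))) := by
    constructor
    rw [← Spec.map_comp, ← Spec.map_comp]
    congr 1
    ext x
    show φ (algebraMap F (Polynomial F) x) = algebraMap R K (algebraMap F R x)
    rw [Polynomial.algebraMap_eq]
    simp [φ]
  let sq : ValuativeCommSq (Spec.map (CommRingCat.ofHom (algebraMap F (Polynomial F)))) :=
    ⟨R, K, Spec.map (CommRingCat.ofHom φ), Spec.map (CommRingCat.ofHom (algebraMap F R)), hsq⟩
  have hlift := hEx sq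
  obtain ⟨⟨l, hl1, hl2⟩⟩ := hlift.exists_lift
  -- l : Spec R ⟶ Spec (Polynomial F), with Spec.map (algebraMap R K) ≫ l = i₁
  let ψ : CommRingCat.of (Polynomial F) ⟶ CommRingCat.of R := Spec.preimage l
  have hl : Spec.map ψ = l := Spec.map_preimage l
  rw [← hl, ← Spec.map_comp] at hl1
  have hψ : ψ ≫ CommRingCat.ofHom (algebraMap R K) = CommRingCat.ofHom φ :=
    Spec.map_injective hl1
  have hψX : algebraMap R K (ψ Polynomial.X) = u := by
    have := congrArg (fun (m : CommRingCat.of (Polynomial F) ⟶ CommRingCat.of K) =>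
      m Polynomial.X) hψ
    simpa [φ] using this
  have hmul : (ψ Polynomial.X) * PowerSeries.X = 1 := by
    apply hinj
    rw [map_mul, hψX, map_one]
    exact inv_mul_cancel₀ hzne
  have : IsUnit (PowerSeries.X : R) := IsUnit.of_mul_eq_one (ψ Polynomial.X) (by rw [mul_comm, hmul])
  have h0 : IsUnit ((PowerSeries.constantCoeff (R := F)) PowerSeries.X) := this.map _
  rw [PowerSeries.constantCoeff_X] at h0
  exact not_isUnit_zero h0

lemma my_hom_factor {S : Scheme.{u}} {R : CommRingCat.{u}} (e : S ⟶ Spec R) :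
    e = S.toSpecΓ ≫ Spec.map ((Scheme.ΓSpecIso R).inv ≫ e.appTop) := by
  have h := Scheme.toSpecΓ_naturality e
  rw [← SpecMap_ΓSpecIso_hom] at h
  rw [Spec.map_comp, ← Category.assoc, ← h, Category.assoc, ← Spec.map_comp,
    Iso.inv_hom_id, Spec.map_id, Category.comp_id]

lemma my_preimage_basicOpen {S : Scheme.{u}} {R : CommRingCat.{u}} (e : S ⟶ Spec R) (r : R) :
    e ⁻¹ᵁ ((Spec R).basicOpen ((Scheme.ΓSpecIso R).inv r))
      = S.basicOpen (e.appTop ((Scheme.ΓSpecIso R).inv r)) := by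
  rw [Scheme.preimage_basicOpen]
  rfl

lemma my_mem_basicOpen_iff {S : Scheme.{u}} {R : CommRingCat.{u}} (e : S ⟶ Spec R) (r : R)
    (x : S) : x ∈ S.basicOpen (e.appTop ((Scheme.ΓSpecIso R).inv r))
      ↔ r ∉ (e.base x).asIdeal := by
  rw [← my_preimage_basicOpen]
  show e.base x ∈ (Spec R).basicOpen ((Scheme.ΓSpecIso R).inv r) ↔ _
  rw [basicOpen_eq_of_affine]
  exact PrimeSpectrum.mem_basicOpen _ _

lemma my_dichotomy {F : Type u} [Field F] (S : Scheme.{u}) (pS : S ⟶ Spec (CommRingCat.of F))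
    [UniversallyClosed pS] [ConnectedSpace S] (t : Γ(S, ⊤)) :
    S.basicOpen t = ⊥ ∨ S.basicOpen t = ⊤ := by
  by_contra hcon
  push_neg at hcon
  obtain ⟨h1, h2⟩ := hcon
  obtain ⟨a, ha⟩ : ∃ a, a ∈ S.basicOpen t := by
    by_contra h; push_neg at h
    exact h1 (by ext x; simpa using h x)
  obtain ⟨b, hb⟩ : ∃ b, b ∉ S.basicOpen t := by
    by_contra h; push_neg at h
    exact h2 (by ext x; simpa using h x)
  classical
  -- the morphism to 𝔸¹ given by t
  let α : CommRingCat.of F ⟶ Γ(S, ⊤) := (Scheme.ΓSpecIso (CommRingCat.of F)).inv ≫ pS.appTop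
  let ρ : CommRingCat.of (Polynomial F) ⟶ Γ(S, ⊤) :=
    CommRingCat.ofHom (Polynomial.eval₂RingHom α.hom t)
  let h : S ⟶ Spec (CommRingCat.of (Polynomial F)) := S.toSpecΓ ≫ Spec.map ρ
  let c : CommRingCat.of F ⟶ CommRingCat.of (Polynomial F) :=
    CommRingCat.ofHom (algebraMap F (Polynomial F))
  have hcρ : c ≫ ρ = α := by
    ext x
    show Polynomial.eval₂ α.hom t (algebraMap F (Polynomial F) x) = α x
    exact Polynomial.eval₂_C _ _
  have hcomp : h ≫ Spec.map c = pS := by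
    show (S.toSpecΓ ≫ Spec.map ρ) ≫ Spec.map c = pS
    rw [Category.assoc, ← Spec.map_comp, hcρ]
    exact (my_hom_factor pS).symm
  have hUCh : UniversallyClosed h := by
    have : UniversallyClosed (h ≫ Spec.map c) := hcomp ▸ ‹UniversallyClosed pS›
    exact myUC_of_comp h (Spec.map c)
  -- identify basic opens
  have happ : ∀ r : Polynomial F,
      h.appTop ((Scheme.ΓSpecIso (CommRingCat.of (Polynomial F))).inv r) = ρ r := by
    intro r
    have hh : ((Scheme.ΓSpecIso (CommRingCat.of (Polynomial F))).inv ≫ h.appTop) = ρ := by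
      show (Scheme.ΓSpecIso (CommRingCat.of (Polynomial F))).inv
          ≫ (S.toSpecΓ ≫ Spec.map ρ).appTop = ρ
      rw [Scheme.Hom.comp_appTop, ← Category.assoc, ← Scheme.ΓSpecIso_inv_naturality,
        Category.assoc, Scheme.toSpecΓ_appTop, Iso.inv_hom_id, Category.comp_id]
    exact congrArg (fun (m : CommRingCat.of (Polynomial F) ⟶ Γ(S, ⊤)) => m r) hh
  have hmem : ∀ (r : Polynomial F) (x : S),
      x ∈ S.basicOpen (ρ r) ↔ r ∉ (h.base x).asIdeal := by
    intro r x
    rw [← happ]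
    exact my_mem_basicOpen_iff h r x
  have hρX : ρ Polynomial.X = t := Polynomial.eval₂_X _ _
  -- the image of h
  let C : Set (PrimeSpectrum (Polynomial F)) := Set.range h.base
  have hCclosed : IsClosed C := h.isClosedMap.isClosed_range
  have hCconn : _root_.IsPreconnected C := isPreconnected_range h.base.hom.continuous
  have haC : h.base a ∈ C := Set.mem_range_self a
  have hbC : h.base b ∈ C := Set.mem_range_self b
  have haX : Polynomial.X ∉ (h.base a).asIdeal := by
    rw [← hmem, hρX]; exact ha
  have hbX : Polynomial.X ∈ (h.base b).asIdeal := by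
    by_contra hc
    refine hb ?_
    have := (hmem Polynomial.X b).mpr hc
    rwa [hρX] at this
  -- case: generic point in the image
  by_cases hgen : (⟨⊥, Ideal.bot_prime⟩ : PrimeSpectrum (Polynomial F)) ∈ C
  · have hsurj : Function.Surjective h.base := by
      intro p
      have hsp : (⟨⊥, Ideal.bot_prime⟩ : PrimeSpectrum (Polynomial F)) ⤳ p :=
        (PrimeSpectrum.le_iff_specializes _ _).mp bot_le
      exact hsp.mem_closed hCclosed hgen
    haveI : Surjective h := ⟨hsurj⟩
    haveI : UniversallyClosed (h ≫ Spec.map c) := hcomp ▸ ‹UniversallyClosed pS›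
    haveI : UniversallyClosed (Spec.map c) := UniversallyClosed.of_comp_surjective h _
    exact my_not_UC F this
  -- case: the image misses the generic point, hence lies in a finite set
  · obtain ⟨g, hgC, hgne⟩ : ∃ g : Polynomial F, (∀ p ∈ C, g ∈ p.asIdeal) ∧ g ≠ 0 := by
      have hIC : PrimeSpectrum.zeroLocus
          ((PrimeSpectrum.vanishingIdeal C : Ideal (Polynomial F)) : Set (Polynomial F)) = C := by
        rw [PrimeSpectrum.zeroLocus_vanishingIdeal_eq_closure, hCclosed.closure_eq]
      have hIne : PrimeSpectrum.vanishingIdeal C ≠ ⊥ := by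
        intro hI
        apply hgen
        rw [← hIC, hI]
        intro r hr
        simp only [SetLike.mem_coe, Ideal.mem_bot] at hr
        simp [hr]
      obtain ⟨g, hgI, hgne⟩ := Submodule.exists_mem_ne_zero_of_ne_bot hIne
      exact ⟨g, fun p hp => (PrimeSpectrum.mem_vanishingIdeal _ _).mp hgI p hp, hgne⟩
    obtain ⟨m, hgm, hnd⟩ := Polynomial.exists_eq_pow_rootMultiplicity_mul_and_not_dvd g hgne 0
    rw [Polynomial.C_0, sub_zero] at hgm hnd
    have hXm : ∀ p : PrimeSpectrum (Polynomial F),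
        Polynomial.X ∈ p.asIdeal → m ∈ p.asIdeal → False := by
      intro p hX hm
      have hmax : (Ideal.span {(Polynomial.X : Polynomial F)}).IsMaximal :=
        PrincipalIdealRing.isMaximal_of_irreducible Polynomial.irreducible_X
      have hle : Ideal.span {(Polynomial.X : Polynomial F)} ≤ p.asIdeal := by
        rwa [Ideal.span_le, Set.singleton_subset_iff]
      have hpeq : p.asIdeal = Ideal.span {(Polynomial.X : Polynomial F)} :=
        (hmax.eq_of_le p.isPrime.ne_top hle).symm
      rw [hpeq, Ideal.mem_span_singleton] at hm
      exact hnd hm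
    have hsplit : ∀ p ∈ C, Polynomial.X ∈ p.asIdeal ∨ m ∈ p.asIdeal := by
      intro p hp
      have hg : g ∈ p.asIdeal := hgC p hp
      rw [hgm] at hg
      rcases p.isPrime.mem_or_mem hg with hh | hh
      · exact Or.inl (p.isPrime.mem_of_pow_mem _ hh)
      · exact Or.inr hh
    let U : Set (PrimeSpectrum (Polynomial F)) := (C ∩ PrimeSpectrum.zeroLocus {m})ᶜ
    let V : Set (PrimeSpectrum (Polynomial F)) :=
      (C ∩ PrimeSpectrum.zeroLocus {(Polynomial.X : Polynomial F)})ᶜ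
    have hUopen : IsOpen U := (hCclosed.inter (PrimeSpectrum.isClosed_zeroLocus _)).isOpen_compl
    have hVopen : IsOpen V := (hCclosed.inter (PrimeSpectrum.isClosed_zeroLocus _)).isOpen_compl
    have hcover : C ⊆ U ∪ V := by
      intro p hp
      by_contra hcontra
      rw [Set.mem_union, not_or] at hcontra
      obtain ⟨hU', hV'⟩ := hcontra
      rw [Set.notMem_compl_iff] at hU' hV'
      exact hXm p (hV'.2 rfl) (hU'.2 rfl)
    have hU1 : (C ∩ U).Nonempty :=
      ⟨h.base b, hbC, fun hc => hXm _ hbX (hc.2 rfl)⟩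
    have hV1 : (C ∩ V).Nonempty :=
      ⟨h.base a, haC, fun hc => haX (hc.2 rfl)⟩
    have hdisj : ¬ (C ∩ (U ∩ V)).Nonempty := by
      rintro ⟨p, hpC, hU', hV'⟩
      rcases hsplit p hpC with hX | hm
      · exact hV' ⟨hpC, Set.singleton_subset_iff.mpr hX⟩
      · exact hU' ⟨hpC, Set.singleton_subset_iff.mpr hm⟩
    exact hdisj (hCconn U V hUopen hVopen hcover hU1 hV1)

/-- **Lemma 3.2 (for the structure sheaf):** a nonconstant morphism from a connected proper
curve `S` to a scheme `X` with an affine basic open `X_s` pulls `s` back to a section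
vanishing at some closed point of `S`. -/
theorem exists_closedPoint_vanishing_pullback_section
    (F : Type*) [Field F]
    (S : Scheme) (pS : S ⟶ Spec (CommRingCat.of F)) [IsProper pS]
    [ConnectedSpace S] (hdimS : topologicalKrullDim S = 1)
    (X : Scheme) (s : Γ(X, ⊤)) (haff : IsAffineOpen (X.basicOpen s))
    (f : S ⟶ X) (hnc : ∃ a b : S, f.base a ≠ f.base b) :
    ∃ x : S, IsClosed ({x} : Set S) ∧ S.Γevaluation x (f.appTop s) = 0 := by
  haveI : CompactSpace S := compactSpace_of_universallyClosed pS
  rcases my_dichotomy S pS (f.appTop s) with hbot | htop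
  · -- the section vanishes everywhere; pick any closed point
    obtain ⟨a, -, -⟩ := hnc
    obtain ⟨x, -, hx⟩ := (isClosed_univ (X := S)).exists_closed_singleton ⟨a, trivial⟩
    refine ⟨x, hx, ?_⟩
    erw [Scheme.evaluation_eq_zero_iff_notMem_basicOpen, hbot]
    exact not_false
  · -- f factors through the affine open X_s; contradiction with nonconstancy
    exfalso
    obtain ⟨a, b, hab⟩ := hnc
    set U : X.Opens := X.basicOpen s with hU
    have hrange : Set.range f.base ⊆ Set.range U.ι.base := by
      rw [Scheme.Opens.range_ι]
      rintro - ⟨x, rfl⟩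
      have : x ∈ f ⁻¹ᵁ U := by
        rw [Scheme.preimage_basicOpen_top, htop]; trivial
      exact this
    let g : S ⟶ U.toScheme := IsOpenImmersion.lift U.ι f hrange
    have hgf : g ≫ U.ι = f := IsOpenImmersion.lift_fac U.ι f hrange
    haveI : IsAffine U.toScheme := haff
    let e : S ⟶ Spec Γ(U.toScheme, ⊤) := g ≫ U.toScheme.isoSpec.hom
    have heab : e.base a ≠ e.base b := by
      intro hc
      apply hab
      rw [← hgf]
      have h1 : ∀ z : S, (U.toScheme.isoSpec.inv).base (e.base z) = g.base z := by
        intro z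
        show (U.toScheme.isoSpec.inv).base ((g ≫ U.toScheme.isoSpec.hom).base z) = _
        rw [Scheme.Hom.comp_apply,
          ← Scheme.Hom.comp_apply U.toScheme.isoSpec.hom U.toScheme.isoSpec.inv,
          Iso.hom_inv_id]
        simp
      have hg : g.base a = g.base b := by rw [← h1 a, ← h1 b, hc]
      simp [Scheme.Hom.comp_apply, hg]
    -- get a separating function
    obtain ⟨x, y, r, hrx, hry⟩ : ∃ (x y : S) (r : Γ(U.toScheme, ⊤)),
        r ∉ (e.base x).asIdeal ∧ r ∈ (e.base y).asIdeal := by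
      obtain ⟨r, hr⟩ : ∃ r, ¬ (r ∈ (e.base a).asIdeal ↔ r ∈ (e.base b).asIdeal) := by
        by_contra hall
        push_neg at hall
        exact heab (PrimeSpectrum.ext (SetLike.ext fun r => hall r))
      rcases Classical.em (r ∈ (e.base a).asIdeal) with h1 | h1
      · have h2 : r ∉ (e.base b).asIdeal := fun h2 => hr ⟨fun _ => h2, fun _ => h1⟩
        exact ⟨b, a, r, h2, h1⟩
      · have h2 : r ∈ (e.base b).asIdeal := by
          rcases Classical.em (r ∈ (e.base b).asIdeal) with h2 | h2
          · exact h2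
          · exact absurd ⟨fun h => absurd h h1, fun h => absurd h h2⟩ hr
        exact ⟨a, b, r, h1, h2⟩
    have hmx : x ∈ S.basicOpen (e.appTop ((Scheme.ΓSpecIso Γ(U.toScheme, ⊤)).inv r)) :=
      (my_mem_basicOpen_iff e r x).mpr hrx
    have hmy : y ∉ S.basicOpen (e.appTop ((Scheme.ΓSpecIso Γ(U.toScheme, ⊤)).inv r)) := fun hc =>
      ((my_mem_basicOpen_iff e r y).mp hc) hry
    rcases my_dichotomy S pS (e.appTop ((Scheme.ΓSpecIso Γ(U.toScheme, ⊤)).inv r)) with hc | hc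
    · rw [hc] at hmx; exact hmx
    · rw [hc] at hmy; exact hmy trivial
end

section
/- Let k be a field and k' a finite Galois field extension of k of degree m. Regard the field of rational functions RatFunc k' as an algebra over RatFunc k via the ring homomorphism induced by the inclusion k → k'. Then for every nonzero h ∈ RatFunc k', the norm N(h) = Algebra.norm (RatFunc k) h ∈ RatFunc k is nonzero and satisfies intDegree(N(h)) = m · intDegree(h). Consequently, if g ∈ RatFunc k is nonzero and m does not divide intDegree(g), then g is not the norm of any element of RatFunc k'. -/
/-- The ring homomorphism `RatFunc k →+* RatFunc k'` induced by the inclusion `k → k'`. -/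
noncomputable def RatFunc.mapAlgebraMap (k k' : Type*) [Field k] [Field k'] [Algebra k k'] :
    RatFunc k →+* RatFunc k' :=
  RatFunc.mapRingHom (Polynomial.mapRingHom (algebraMap k k')) (by
    intro p hp
    simp only [Submonoid.mem_comap, Polynomial.coe_mapRingHom]
    rw [mem_nonZeroDivisors_iff_ne_zero] at hp ⊢
    exact fun h => hp (Polynomial.map_injective _ (algebraMap k k').injective
      (by simpa using h)))

/-- Regard `RatFunc k'` as an algebra over `RatFunc k` via the induced ring homomorphism. -/
noncomputable instance (k k' : Type*) [Field k] [Field k'] [Algebra k k'] :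
    Algebra (RatFunc k) (RatFunc k') :=
  (RatFunc.mapAlgebraMap k k').toAlgebra

namespace NormAux

open Polynomial

variable {A B C : Type*} [Field A] [Field B] [Field C]

/-- Lift of a field hom to rational function fields. -/
noncomputable def lift (f : A →+* B) : RatFunc A →+* RatFunc B :=
  RatFunc.mapRingHom (Polynomial.mapRingHom f) (by
    intro p hp
    simp only [Submonoid.mem_comap, Polynomial.coe_mapRingHom]
    rw [mem_nonZeroDivisors_iff_ne_zero] at hp ⊢
    exact fun h => hp (Polynomial.map_injective _ f.injective (by simpa using h)))

lemma lift_apply (f : A →+* B) (x : RatFunc A) :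
    lift f x = algebraMap _ _ (x.num.map f) / algebraMap _ _ (x.denom.map f) := by
  have h : lift f x = RatFunc.map (Polynomial.mapRingHom f) (by
      intro p hp
      simp only [Submonoid.mem_comap, Polynomial.coe_mapRingHom]
      rw [mem_nonZeroDivisors_iff_ne_zero] at hp ⊢
      exact fun h => hp (Polynomial.map_injective _ f.injective (by simpa using h))) x :=
    congrFun (RatFunc.coe_mapRingHom_eq_coe_map _ _) x
  rw [h, RatFunc.map_apply]
  simp

lemma lift_algebraMap (f : A →+* B) (p : A[X]) :
    lift f (algebraMap _ _ p) = algebraMap _ _ (p.map f) := by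
  rw [lift_apply]
  simp

lemma lift_comp (g : B →+* C) (f : A →+* B) (x : RatFunc A) :
    lift g (lift f x) = lift (g.comp f) x := by
  rw [lift_apply f, map_div₀, lift_algebraMap, lift_algebraMap, lift_apply (g.comp f),
    Polynomial.map_map, Polynomial.map_map]

lemma lift_id (x : RatFunc A) : lift (RingHom.id A) x = x := by
  rw [lift_apply]
  simp [Polynomial.map_id]

lemma intDegree_div (x y : RatFunc A) (hx : x ≠ 0) (hy : y ≠ 0) :
    (x / y).intDegree = x.intDegree - y.intDegree := by
  have h0 : x / y ≠ 0 := div_ne_zero hx hy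
  have h := RatFunc.intDegree_mul h0 hy
  rw [div_mul_cancel₀ x hy] at h
  omega

lemma lift_intDegree (f : A →+* B) (x : RatFunc A) :
    (lift f x).intDegree = x.intDegree := by
  rcases eq_or_ne x 0 with rfl | hx
  · simp [RatFunc.intDegree_zero]
  · rw [lift_apply, intDegree_div _ _
      (RatFunc.algebraMap_ne_zero (Polynomial.map_ne_zero (RatFunc.num_ne_zero hx)))
      (RatFunc.algebraMap_ne_zero (Polynomial.map_ne_zero (RatFunc.denom_ne_zero x))),
      RatFunc.intDegree_polynomial, RatFunc.intDegree_polynomial,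
      Polynomial.natDegree_map, Polynomial.natDegree_map]
    rfl

/-- Lift of a field isomorphism. -/
noncomputable def liftEquiv (e : A ≃+* B) : RatFunc A ≃+* RatFunc B :=
  RingEquiv.ofRingHom (lift (e : A →+* B)) (lift (e.symm : B →+* A))
    (RingHom.ext fun x => by
      have h1 : lift (e : A →+* B) (lift (e.symm : B →+* A) x) = x := by
        rw [lift_comp,
          show ((e : A →+* B).comp (e.symm : B →+* A)) = RingHom.id B from
            RingHom.ext fun a => e.apply_symm_apply a,
          lift_id]
      simpa using h1)
    (RingHom.ext fun x => by
      have h1 : lift (e.symm : B →+* A) (lift (e : A →+* B) x) = x := by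
        rw [lift_comp,
          show ((e.symm : B →+* A).comp (e : A →+* B)) = RingHom.id A from
            RingHom.ext fun a => e.symm_apply_apply a,
          lift_id]
      simpa using h1)

variable (k k' : Type*) [Field k] [Field k'] [Algebra k k']

/-- The monoid hom from Galois group of `k'/k` to ring automorphisms of `RatFunc k'`. -/
noncomputable def liftAutHom : (k' ≃ₐ[k] k') →* RingAut (RatFunc k') where
  toFun σ := liftEquiv (σ : k' ≃+* k')
  map_one' := RingEquiv.ext fun x => by
    have h1 : lift (((1 : k' ≃ₐ[k] k') : k' ≃+* k') : k' →+* k') x = x := by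
      rw [show (((1 : k' ≃ₐ[k] k') : k' ≃+* k') : k' →+* k') = RingHom.id k' from
        RingHom.ext fun a => rfl, lift_id]
    exact h1
  map_mul' σ τ := RingEquiv.ext fun x => by
    have h1 : lift ((((σ * τ : k' ≃ₐ[k] k')) : k' ≃+* k') : k' →+* k') x =
        lift (((σ : k' ≃+* k') : k' →+* k'))
          (lift (((τ : k' ≃+* k') : k' →+* k')) x) := by
      rw [lift_comp]
      exact congrArg (fun f => lift f x) (RingHom.ext fun a => rfl)
    exact h1

lemma intDegree_prod {ι : Type*} (s : Finset ι) (f : ι → RatFunc A)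
    (hf : ∀ i ∈ s, f i ≠ 0) :
    (∏ i ∈ s, f i).intDegree = ∑ i ∈ s, (f i).intDegree := by
  classical
  induction s using Finset.cons_induction with
  | empty => simp [RatFunc.intDegree_one]
  | cons i s his ih =>
    rw [Finset.prod_cons, Finset.sum_cons,
      RatFunc.intDegree_mul (hf i (Finset.mem_cons_self i s))
        (Finset.prod_ne_zero_iff.mpr fun j hj => hf j (Finset.mem_cons_of_mem hj)),
      ih fun j hj => hf j (Finset.mem_cons_of_mem hj)]

end NormAux

set_option synthInstance.maxHeartbeats 400000 in
open Polynomial in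
/-- **Norm degree computation (from the proof of Proposition 5.4):** for a finite Galois
extension `k'/k` of degree `m`, the norm from `k'(t)` to `k(t)` of a nonzero element is nonzero
of `intDegree` equal to `m` times the original `intDegree`; consequently a nonzero `g ∈ k(t)`
whose `intDegree` is not divisible by `m` is not a norm from `k'(t)`. -/
theorem ratFunc_norm_intDegree
    (k k' : Type*) [Field k] [Field k'] [Algebra k k'] [IsGalois k k']
    [FiniteDimensional k k'] (m : ℕ) (hm : Module.finrank k k' = m) :
    (∀ h : RatFunc k', h ≠ 0 →
      Algebra.norm (RatFunc k) h ≠ 0 ∧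
        (Algebra.norm (RatFunc k) h).intDegree = (m : ℤ) * h.intDegree) ∧
    (∀ g : RatFunc k, g ≠ 0 → ¬ ((m : ℤ) ∣ g.intDegree) →
      ∀ h : RatFunc k', Algebra.norm (RatFunc k) h ≠ g) := by
  classical
  -- the algebra map
  have hjl : ∀ x : RatFunc k,
      algebraMap (RatFunc k) (RatFunc k') x = NormAux.lift (algebraMap k k') x := fun _ => rfl
  -- the action of the Galois group on `RatFunc k'`
  letI : MulSemiringAction (k' ≃ₐ[k] k') (RatFunc k') :=
    MulSemiringAction.compHom _ (NormAux.liftAutHom k k')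
  have smul_def : ∀ (σ : k' ≃ₐ[k] k') (x : RatFunc k'),
      σ • x = NormAux.lift (σ : k' →+* k') x := fun _ _ => rfl
  haveI : FaithfulSMul (k' ≃ₐ[k] k') (RatFunc k') := by
    constructor
    intro σ τ hστ
    apply AlgEquiv.ext
    intro a
    have h := hστ (algebraMap k'[X] _ (Polynomial.C a))
    rw [smul_def, smul_def, NormAux.lift_algebraMap, NormAux.lift_algebraMap,
      Polynomial.map_C, Polynomial.map_C] at h
    have h2 := RatFunc.algebraMap_injective k' h
    exact Polynomial.C_injective h2
  -- fixed field
  set F := FixedPoints.subfield (k' ≃ₐ[k] k') (RatFunc k') with hF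
  have memF : ∀ x : RatFunc k', x ∈ F ↔ ∀ σ : k' ≃ₐ[k] k', σ • x = x := fun x => Iff.rfl
  -- the image of `algebraMap` is contained in `F`
  have hrange : ∀ x : RatFunc k, algebraMap (RatFunc k) (RatFunc k') x ∈ F := by
    intro x
    rw [memF]
    intro σ
    rw [smul_def, hjl, NormAux.lift_comp]
    have h2 : ((σ : k' →+* k').comp (algebraMap k k')) = algebraMap k k' :=
      RingHom.ext fun a => σ.commutes a
    rw [h2]
  -- every fixed element comes from `RatFunc k`
  have key : ∀ y : RatFunc k', y ∈ F → ∃ x : RatFunc k,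
      algebraMap (RatFunc k) (RatFunc k') x = y := by
    intro y hy
    rw [memF] at hy
    have hnum : ∀ σ : k' ≃ₐ[k] k',
        y.num.map (σ : k' →+* k') = y.num ∧ y.denom.map (σ : k' →+* k') = y.denom := by
      intro σ
      have h1 : NormAux.lift (σ : k' →+* k') y = y := by rw [← smul_def]; exact hy σ
      set N := y.num.map (σ : k' →+* k') with hN
      set D := y.denom.map (σ : k' →+* k') with hD
      have hDm : D.Monic := (RatFunc.monic_denom y).map _
      have hcop : IsCoprime N D := by
        have h2 := (RatFunc.isCoprime_num_denom y).map (Polynomial.mapRingHom (σ : k' →+* k'))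
        simpa using h2
      have hrepr : y = algebraMap _ _ N / algebraMap _ _ D := by
        rw [← h1, NormAux.lift_apply]
      have heq : y.num * D = N * y.denom :=
        (RatFunc.num_mul_eq_mul_denom_iff hDm.ne_zero).mpr hrepr
      have hyd : y.denom ∣ D := by
        apply (RatFunc.isCoprime_num_denom y).symm.dvd_of_dvd_mul_left
        exact ⟨N, by linear_combination heq⟩
      have hdy : D ∣ y.denom := by
        apply hcop.symm.dvd_of_dvd_mul_left
        exact ⟨y.num, by linear_combination -heq⟩
      have hDeq : D = y.denom :=
        Polynomial.eq_of_monic_of_associated hDm (RatFunc.monic_denom y)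
          (associated_of_dvd_dvd hdy hyd)
      have hNeq : N = y.num := by
        have := heq
        rw [hDeq] at this
        exact (mul_right_cancel₀ (RatFunc.denom_ne_zero y) this.symm)
      exact ⟨hNeq, hDeq⟩
    have hbot : IntermediateField.fixedField (⊤ : Subgroup (k' ≃ₐ[k] k')) = ⊥ :=
      OrderIso.map_bot
        (@IsGalois.intermediateFieldEquivSubgroup k _ k' _ _ _ inferInstance).symm
    have coeffmem : ∀ p : k'[X], (∀ σ : k' ≃ₐ[k] k', p.map (σ : k' →+* k') = p) →
        ∃ q : k[X], q.map (algebraMap k k') = p := by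
      intro p hp
      rw [← Polynomial.mem_lifts, Polynomial.lifts_iff_coeff_lifts]
      intro n
      have hmem : p.coeff n ∈ IntermediateField.fixedField (⊤ : Subgroup (k' ≃ₐ[k] k')) := by
        have hmem2 : p.coeff n ∈ MulAction.fixedPoints ((⊤ : Subgroup (k' ≃ₐ[k] k')) : Type _) k' := by
          rw [MulAction.mem_fixedPoints]
          intro σ
          have h2 := congrArg (fun q => Polynomial.coeff q n) (hp σ.1)
          exact (by simpa [Polynomial.coeff_map, AlgEquiv.smul_def] using h2 :
            (σ : k' ≃ₐ[k] k') (p.coeff n) = p.coeff n)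
        exact hmem2
      rw [hbot] at hmem
      exact IntermediateField.mem_bot.mp hmem
    obtain ⟨pn, hpn⟩ := coeffmem y.num fun σ => (hnum σ).1
    obtain ⟨pd, hpd⟩ := coeffmem y.denom fun σ => (hnum σ).2
    refine ⟨algebraMap _ _ pn / algebraMap _ _ pd, ?_⟩
    rw [hjl, map_div₀, NormAux.lift_algebraMap, NormAux.lift_algebraMap, hpn, hpd,
      RatFunc.num_div_denom]
  -- the ring equivalence `RatFunc k ≃+* F`
  let jF : RatFunc k →+* F := (algebraMap (RatFunc k) (RatFunc k')).codRestrict F hrange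
  have hjF : ∀ x : RatFunc k, (jF x : RatFunc k') = algebraMap (RatFunc k) (RatFunc k') x :=
    fun _ => rfl
  have hbij : Function.Bijective jF := by
    constructor
    · intro a b hab
      have : (jF a : RatFunc k') = jF b := congrArg _ hab
      rw [hjF, hjF] at this
      exact (algebraMap (RatFunc k) (RatFunc k')).injective this
    · rintro ⟨y, hy⟩
      obtain ⟨x, hx⟩ := key y hy
      exact ⟨x, Subtype.ext (by rw [hjF, hx])⟩
  let e₁ : RatFunc k ≃+* F := RingEquiv.ofBijective jF hbij
  have he₁ : ∀ x : RatFunc k, (e₁ x : RatFunc k') = algebraMap (RatFunc k) (RatFunc k') x :=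
    fun _ => rfl
  -- relate the norms
  have hnorm : ∀ x : RatFunc k', Algebra.norm (RatFunc k) x = e₁.symm (Algebra.norm F x) := by
    intro x
    have he : (algebraMap F (RatFunc k')).comp (e₁ : RatFunc k →+* F) =
        (((RingEquiv.refl (RatFunc k')) : RatFunc k' →+* RatFunc k')).comp
          (algebraMap (RatFunc k) (RatFunc k')) := RingHom.ext fun a => rfl
    simpa using Algebra.norm_eq_of_equiv_equiv e₁ (RingEquiv.refl (RatFunc k')) he x
  -- cardinality facts
  have cardG : Fintype.card (k' ≃ₐ[k] k') = m := by
    rw [← Nat.card_eq_fintype_card, IsGalois.card_aut_eq_finrank, hm]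
  have hfinrank : Module.finrank F (RatFunc k') = m := by
    rw [hF, FixedPoints.finrank_eq_card, cardG]
  -- first statement
  have main : ∀ h : RatFunc k', h ≠ 0 →
      Algebra.norm (RatFunc k) h ≠ 0 ∧
        (Algebra.norm (RatFunc k) h).intDegree = (m : ℤ) * h.intDegree := by
    intro h hne
    have hF0 : Algebra.norm F h ≠ 0 := Algebra.norm_ne_zero_iff.mpr hne
    have h1 : Algebra.norm (RatFunc k) h ≠ 0 := by
      rw [hnorm]
      intro hz
      exact hF0 (by simpa using congrArg e₁ hz)
    refine ⟨h1, ?_⟩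
    -- push into RatFunc k'
    have h2 : algebraMap (RatFunc k) (RatFunc k') (Algebra.norm (RatFunc k) h) =
        algebraMap F (RatFunc k') (Algebra.norm F h) := by
      rw [hnorm, ← he₁, RingEquiv.apply_symm_apply]
      rfl
    have h3 : algebraMap F (RatFunc k') (Algebra.norm F h) =
        ∏ σ : RatFunc k' ≃ₐ[F] RatFunc k', σ h :=
      Algebra.norm_eq_prod_automorphisms F h
    have h4 : ∀ σ : RatFunc k' ≃ₐ[F] RatFunc k', (σ h).intDegree = h.intDegree := by
      intro σ
      obtain ⟨g, hg⟩ :=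
        FixedPoints.toAlgAut_surjective (k' ≃ₐ[k] k') (RatFunc k') σ
      have hgh : σ h = g • h := by rw [← hg]; rfl
      rw [hgh, smul_def, NormAux.lift_intDegree]
    have h5 : ∀ σ : RatFunc k' ≃ₐ[F] RatFunc k', σ h ≠ 0 := by
      intro σ hz
      exact hne (by simpa using (map_eq_zero_iff σ σ.injective).mp hz)
    have cardAut : Fintype.card (RatFunc k' ≃ₐ[F] RatFunc k') = m := by
      rw [← Nat.card_eq_fintype_card, IsGalois.card_aut_eq_finrank, hfinrank]
    calc (Algebra.norm (RatFunc k) h).intDegree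
        = (algebraMap (RatFunc k) (RatFunc k') (Algebra.norm (RatFunc k) h)).intDegree := by
          rw [hjl, NormAux.lift_intDegree]
      _ = (∏ σ : RatFunc k' ≃ₐ[F] RatFunc k', σ h).intDegree := by rw [h2, h3]
      _ = ∑ σ : RatFunc k' ≃ₐ[F] RatFunc k', (σ h).intDegree :=
          NormAux.intDegree_prod _ _ fun σ _ => h5 σ
      _ = ∑ _σ : RatFunc k' ≃ₐ[F] RatFunc k', h.intDegree := by
          exact Finset.sum_congr rfl fun σ _ => h4 σ
      _ = (m : ℤ) * h.intDegree := by
          rw [Finset.sum_const, Finset.card_univ, cardAut, nsmul_eq_mul]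
  refine ⟨main, ?_⟩
  intro g hg hdvd h heq
  rcases eq_or_ne h 0 with rfl | hne
  · apply hg
    rw [← heq, hnorm, Algebra.norm_zero, map_zero]
  · obtain ⟨-, hdeg⟩ := main h hne
    rw [heq] at hdeg
    exact hdvd ⟨h.intDegree, hdeg⟩
end

section
/- Let K be a field, ξ ∈ K, and m a positive integer such that the polynomial X^m − ξ is irreducible over K. Let L = K[X]/(X^m − ξ) and let r ∈ L denote the image of X, so that {1, r, r², …, r^{m−1}} is a K-basis of L. Then for all x₀, x₁, …, x_{m−1} ∈ K, the field norm Norm_{L/K}(x₀ + x₁ r + ⋯ + x_{m−1} r^{m−1}) equals the determinant of the m × m matrix M over K whose (i,j)-entry, for indices 0 ≤ i, j ≤ m − 1, is x_{i−j} if i ≥ j and ξ · x_{m+i−j} if i < j. -/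
open Polynomial

/-- **The norm form of a Kummer-type extension (paragraph 3.10.3):** the field norm of
`x₀ + x₁ r + ⋯ + x_{m−1} r^{m−1}` in `L = K[X]/(X^m − ξ)` is the determinant of the twisted
circulant matrix `M_{ξ,m}`. -/
theorem norm_adjoinRoot_eq_det_circulant
    (K : Type*) [Field K] (ξ : K) (m : ℕ) (hm : 0 < m)
    (hirr : Irreducible (X ^ m - C ξ)) (x : Fin m → K) :
    Algebra.norm K
      (∑ i : Fin m,
        algebraMap K (AdjoinRoot (X ^ m - C ξ)) (x i) * AdjoinRoot.root (X ^ m - C ξ) ^ (i : ℕ)) =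
    Matrix.det (Matrix.of fun i j : Fin m =>
      if h : (j : ℕ) ≤ (i : ℕ) then x ⟨(i : ℕ) - (j : ℕ), by have := i.isLt; omega⟩
      else ξ * x ⟨m + (i : ℕ) - (j : ℕ), by have := i.isLt; have := j.isLt; omega⟩) := by
  haveI : NeZero m := ⟨hm.ne'⟩
  haveI := Fact.mk hirr
  set f : K[X] := X ^ m - C ξ with hfdef
  have hf0 : f ≠ 0 := hirr.ne_zero
  have hdeg : f.natDegree = m := natDegree_X_pow_sub_C
  set L := AdjoinRoot f
  set r : L := AdjoinRoot.root f with hr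
  have hrm : r ^ m = algebraMap K L ξ := by
    have := AdjoinRoot.eval₂_root f
    rw [hfdef] at this
    simp only [eval₂_sub, eval₂_pow, eval₂_X, eval₂_C, sub_eq_zero] at this
    exact this
  let B := AdjoinRoot.powerBasis hf0
  let b : Module.Basis (Fin m) K L := B.basis.reindex (finCongr hdeg)
  have hb : ∀ i : Fin m, b i = r ^ (i : ℕ) := by
    intro i
    simp only [b, B, Module.Basis.reindex_apply, finCongr_symm, finCongr_apply,
      PowerBasis.basis_eq_pow, AdjoinRoot.powerBasis_gen, Fin.coe_cast]
    rfl
  set M : Matrix (Fin m) (Fin m) K := Matrix.of fun i j : Fin m =>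
      if h : (j : ℕ) ≤ (i : ℕ) then x ⟨(i : ℕ) - (j : ℕ), by have := i.isLt; omega⟩
      else ξ * x ⟨m + (i : ℕ) - (j : ℕ), by have := i.isLt; have := j.isLt; omega⟩ with hM
  set y : L := ∑ i : Fin m, algebraMap K L (x i) * r ^ (i : ℕ) with hy
  have key : ∀ j : Fin m, y * r ^ (j : ℕ) = ∑ i : Fin m, M i j • r ^ (i : ℕ) := by
    intro j
    rw [hy, Finset.sum_mul]
    rw [← Equiv.sum_comp (Equiv.addRight j) (fun i => M i j • r ^ (i : ℕ))]
    simp only [Equiv.coe_addRight]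
    apply Finset.sum_congr rfl
    intro k _
    have hadd : ((k + j : Fin m) : ℕ) = ((k : ℕ) + (j : ℕ)) % m := by
      rw [Fin.add_def]
    rcases lt_or_ge ((k : ℕ) + (j : ℕ)) m with h | h
    · have hv : ((k + j : Fin m) : ℕ) = (k : ℕ) + (j : ℕ) := by
        rw [hadd, Nat.mod_eq_of_lt h]
      have hle : (j : ℕ) ≤ ((k + j : Fin m) : ℕ) := by omega
      rw [hM]
      simp only [Matrix.of_apply, hle, dif_pos]
      have : (⟨((k + j : Fin m) : ℕ) - (j : ℕ), by omega⟩ : Fin m) = k := by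
        ext; simp [hv]
      rw [this, hv, Algebra.smul_def, pow_add, mul_assoc]
    · have hv : ((k + j : Fin m) : ℕ) = (k : ℕ) + (j : ℕ) - m := by
        rw [hadd, Nat.mod_eq_sub_mod h, Nat.mod_eq_of_lt (by have := k.isLt; omega)]
      have hlt : ¬ ((j : ℕ) ≤ ((k + j : Fin m) : ℕ)) := by
        have := k.isLt; omega
      rw [hM]
      simp only [Matrix.of_apply, hlt, dif_neg, not_false_iff]
      have : (⟨m + ((k + j : Fin m) : ℕ) - (j : ℕ), by have := j.isLt; omega⟩ : Fin m) = k := by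
        ext; have := k.isLt; simp only [hv]; omega
      rw [this]
      have hpow : r ^ ((k : ℕ) + (j : ℕ)) = r ^ (((k : ℕ) + (j : ℕ)) - m) * (algebraMap K L ξ) := by
        rw [← hrm, ← pow_add]
        congr 1
        omega
      rw [hv, Algebra.smul_def, map_mul, mul_assoc, ← pow_add, hpow]
      ring
  have hmul : Algebra.leftMulMatrix b y = M := by
    ext i j
    rw [Algebra.leftMulMatrix_eq_repr_mul, hb j, key j]
    have : (∑ i : Fin m, M i j • r ^ (i : ℕ)) = ∑ i : Fin m, M i j • b i := by
      simp [hb]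
    rw [this, Module.Basis.repr_sum_self]
  rw [Algebra.norm_eq_matrix_det b, hmul]
end
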